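/- Let x_1, …, x_n ∈ ℝ^d, b : ℕ → ℝ, and H be as in the multivariate learning setup (unit-norm data, b_0 ≥ 1, b_k ≥ 1/k² for k ≥ 1, Σ_k b_k < ∞, H positive definite). Let f(s,t) = Σ_{j,k} c_{jk} s^j t^k be a bivariate power series and f̃(s,t) = Σ_{j,k} |c_{jk}| s^j t^k. Let g and h be given by multivariate power-series families with auxiliary functions g̃ and h̃ (all finite at 1 along with their derivatives), and suppose f̃ and its partial derivatives converge at (g̃(1), h̃(1)). Define y ∈ ℝⁿ by y_a = f(g(x_a), h(x_a)). Then √(yᵀ H⁻¹ y) ≤ ∂_s f̃(g̃(1), h̃(1))·g̃′(1) + ∂_t f̃(g̃(1), h̃(1))·h̃′(1) + f̃(g̃(0), h̃(0)). -/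

import Mathlib

open Matrix
open scoped RealInnerProductSpace

/-- The `k`-th auxiliary coefficient `ãₖ = ∑_v |a_{k,v}| ∏ᵢ ‖β_{k,v,i}‖` of a
multivariate power-series family. -/
noncomputable def auxCoef (d : ℕ) (a : ℕ → ℕ → ℝ)
    (β : (k : ℕ) → ℕ → Fin k → EuclideanSpace ℝ (Fin d)) (k : ℕ) : ℝ :=
  ∑' v : ℕ, |a k v| * ∏ i : Fin k, ‖β k v i‖

/-- The function `x ↦ ∑_k ∑_v a_{k,v} ∏ᵢ ⟪β_{k,v,i}, x⟫` represented by a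
multivariate power-series family. -/
noncomputable def familyFun (d : ℕ) (a : ℕ → ℕ → ℝ)
    (β : (k : ℕ) → ℕ → Fin k → EuclideanSpace ℝ (Fin d))
    (x : EuclideanSpace ℝ (Fin d)) : ℝ :=
  ∑' k : ℕ, ∑' v : ℕ, a k v * ∏ i : Fin k, ⟪β k v i, x⟫


set_option maxHeartbeats 1000000

namespace Stmt9

variable {d : ℕ}

/-- A formal representation of a function as an (infinite) sum of monomials
`coef i * ∏ j ⟪vec i j, ·⟫`. -/
structure Rep (d : ℕ) where
  ι : Type
  deg : ι → ℕ
  coef : ι → ℝ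
  vec : (i : ι) → Fin (deg i) → EuclideanSpace ℝ (Fin d)

noncomputable def Rep.wt (R : Rep d) (i : R.ι) : ℝ := |R.coef i| * ∏ j, ‖R.vec i j‖

noncomputable def Rep.val (R : Rep d) (z : EuclideanSpace ℝ (Fin d)) : ℝ :=
  ∑' i, R.coef i * ∏ j, ⟪R.vec i j, z⟫

noncomputable def Rep.A (R : Rep d) : ℝ := ∑' i, R.wt i
noncomputable def Rep.B (R : Rep d) : ℝ := ∑' i, (R.deg i : ℝ) * R.wt i
noncomputable def Rep.Z (R : Rep d) : ℝ := ∑' i, (if R.deg i = 0 then R.wt i else 0)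

def Rep.Good (R : Rep d) : Prop :=
  Summable R.wt ∧ Summable (fun i => (R.deg i : ℝ) * R.wt i)

lemma Rep.wt_nonneg (R : Rep d) (i : R.ι) : 0 ≤ R.wt i :=
  mul_nonneg (abs_nonneg _) (Finset.prod_nonneg fun _ _ => norm_nonneg _)

lemma Rep.degwt_nonneg (R : Rep d) (i : R.ι) : 0 ≤ (R.deg i : ℝ) * R.wt i :=
  mul_nonneg (Nat.cast_nonneg _) (R.wt_nonneg i)

lemma Rep.zwt_nonneg (R : Rep d) (i : R.ι) :
    0 ≤ (if R.deg i = 0 then R.wt i else 0) := by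
  split
  · exact R.wt_nonneg i
  · exact le_rfl

lemma Rep.zwt_le_wt (R : Rep d) (i : R.ι) :
    (if R.deg i = 0 then R.wt i else 0) ≤ R.wt i := by
  split
  · exact le_rfl
  · exact R.wt_nonneg i

lemma Rep.summable_zwt {R : Rep d} (hR : Summable R.wt) :
    Summable (fun i => if R.deg i = 0 then R.wt i else 0) :=
  Summable.of_nonneg_of_le R.zwt_nonneg R.zwt_le_wt hR

lemma Rep.A_nonneg (R : Rep d) : 0 ≤ R.A := tsum_nonneg R.wt_nonneg
lemma Rep.B_nonneg (R : Rep d) : 0 ≤ R.B := tsum_nonneg R.degwt_nonneg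
lemma Rep.Z_nonneg (R : Rep d) : 0 ≤ R.Z := tsum_nonneg R.zwt_nonneg

lemma Rep.Z_le_A {R : Rep d} (hR : Summable R.wt) : R.Z ≤ R.A :=
  Summable.tsum_le_tsum R.zwt_le_wt (Rep.summable_zwt hR) hR

lemma Rep.abs_term_le (R : Rep d) {z : EuclideanSpace ℝ (Fin d)} (hz : ‖z‖ ≤ 1) (i : R.ι) :
    |R.coef i * ∏ j, ⟪R.vec i j, z⟫| ≤ R.wt i := by
  rw [abs_mul, Finset.abs_prod]
  refine mul_le_mul_of_nonneg_left ?_ (abs_nonneg _)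
  refine Finset.prod_le_prod (fun _ _ => abs_nonneg _) fun j _ => ?_
  calc |⟪R.vec i j, z⟫| ≤ ‖R.vec i j‖ * ‖z‖ := abs_real_inner_le_norm _ _
    _ ≤ ‖R.vec i j‖ * 1 := by
        exact mul_le_mul_of_nonneg_left hz (norm_nonneg _)
    _ = ‖R.vec i j‖ := mul_one _

lemma Rep.summable_term (R : Rep d) (hR : Summable R.wt) {z : EuclideanSpace ℝ (Fin d)}
    (hz : ‖z‖ ≤ 1) :
    Summable fun i => R.coef i * ∏ j, ⟪R.vec i j, z⟫ :=
  Summable.of_abs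
    (Summable.of_nonneg_of_le (fun _ => abs_nonneg _) (fun i => R.abs_term_le hz i) hR)

lemma summable_norm_of_nonneg {ι : Type*} {f : ι → ℝ} (h0 : ∀ i, 0 ≤ f i) (h : Summable f) :
    Summable fun i => ‖f i‖ :=
  h.congr fun i => (Real.norm_of_nonneg (h0 i)).symm

/-! ### The unit representation -/

def Rep.one : Rep d :=
  ⟨PUnit, fun _ => 0, fun _ => 1, fun _ => fun j => j.elim0⟩

instance : Fintype (Rep.one (d := d)).ι := inferInstanceAs (Fintype PUnit.{1})
instance : Finite (Rep.one (d := d)).ι := inferInstanceAs (Finite PUnit.{1})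
instance : Unique (Rep.one (d := d)).ι := inferInstanceAs (Unique PUnit.{1})

lemma Rep.wt_one (i : (Rep.one (d := d)).ι) : Rep.one.wt i = 1 := by
  simp [Rep.wt, Rep.one]
  exact Fin.prod_univ_zero _

lemma Rep.good_one : (Rep.one (d := d)).Good :=
  ⟨Summable.of_finite, Summable.of_finite⟩

lemma Rep.A_one : (Rep.one (d := d)).A = 1 := by
  rw [Rep.A, tsum_fintype, Finset.sum_congr rfl fun i _ => Rep.wt_one i]
  simp

lemma Rep.B_one : (Rep.one (d := d)).B = 0 := by
  rw [Rep.B, tsum_fintype]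
  have h : ∀ i : (Rep.one (d := d)).ι, ((Rep.one (d := d)).deg i : ℝ) * Rep.one.wt i = 0 := by
    intro i
    rw [Rep.wt_one]
    show ((0 : ℕ) : ℝ) * 1 = 0
    simp
  rw [Finset.sum_congr rfl fun i _ => h i]
  simp

lemma Rep.Z_one : (Rep.one (d := d)).Z = 1 := by
  rw [Rep.Z, tsum_fintype]
  have h : ∀ i : (Rep.one (d := d)).ι,
      (if (Rep.one (d := d)).deg i = 0 then Rep.one.wt i else 0) = 1 := by
    intro i
    have hd : (Rep.one (d := d)).deg i = 0 := rfl
    rw [if_pos hd, Rep.wt_one]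
  rw [Finset.sum_congr rfl fun i _ => h i]
  simp

lemma Rep.val_one (z : EuclideanSpace ℝ (Fin d)) : Rep.one.val z = 1 := by
  rw [Rep.val, tsum_fintype]
  have h : ∀ i : (Rep.one (d := d)).ι,
      Rep.one.coef i * ∏ j, ⟪Rep.one.vec i j, z⟫ = 1 := by
    intro i
    show (1 : ℝ) * ∏ j : Fin 0, ⟪Rep.one.vec i j, z⟫ = 1
    simp
  rw [Finset.sum_congr rfl fun i _ => h i]
  simp

/-! ### Products of representations -/

lemma prod_append_apply {m k : ℕ} (u : Fin m → EuclideanSpace ℝ (Fin d))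
    (v : Fin k → EuclideanSpace ℝ (Fin d)) (f : EuclideanSpace ℝ (Fin d) → ℝ) :
    ∏ j : Fin (m + k), f (Fin.append u v j) = (∏ i, f (u i)) * ∏ i, f (v i) := by
  rw [Fin.prod_univ_add]
  simp [Fin.append_left, Fin.append_right]

def Rep.mul (R S : Rep d) : Rep d where
  ι := R.ι × S.ι
  deg p := R.deg p.1 + S.deg p.2
  coef p := R.coef p.1 * S.coef p.2
  vec p := Fin.append (R.vec p.1) (S.vec p.2)

lemma Rep.wt_mul (R S : Rep d) (p : R.ι × S.ι) :
    (R.mul S).wt p = R.wt p.1 * S.wt p.2 := by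
  show |R.coef p.1 * S.coef p.2| * ∏ j, ‖Fin.append (R.vec p.1) (S.vec p.2) j‖ = _
  rw [prod_append_apply (f := fun w => ‖w‖), abs_mul, Rep.wt, Rep.wt]
  ring

lemma Rep.good_mul {R S : Rep d} (hR : R.Good) (hS : S.Good) : (R.mul S).Good := by
  constructor
  · exact (hR.1.mul_of_nonneg hS.1 R.wt_nonneg S.wt_nonneg).congr
      fun p => (R.wt_mul S p).symm
  · have h1 : Summable fun p : R.ι × S.ι => ((R.deg p.1 : ℝ) * R.wt p.1) * S.wt p.2 :=
      hR.2.mul_of_nonneg hS.1 R.degwt_nonneg S.wt_nonneg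
    have h2 : Summable fun p : R.ι × S.ι => R.wt p.1 * ((S.deg p.2 : ℝ) * S.wt p.2) :=
      hR.1.mul_of_nonneg hS.2 R.wt_nonneg S.degwt_nonneg
    refine (h1.add h2).congr fun p => ?_
    rw [Rep.wt_mul]
    show _ = ((R.deg p.1 + S.deg p.2 : ℕ) : ℝ) * (R.wt p.1 * S.wt p.2)
    push_cast
    ring

lemma Rep.A_mul {R S : Rep d} (hR : Summable R.wt) (hS : Summable S.wt) :
    (R.mul S).A = R.A * S.A := by
  have e0 : (R.mul S).A = ∑' p : R.ι × S.ι, R.wt p.1 * S.wt p.2 := tsum_congr (R.wt_mul S)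
  rw [e0, Rep.A, Rep.A]
  exact (tsum_mul_tsum_of_summable_norm
    (summable_norm_of_nonneg R.wt_nonneg hR)
    (summable_norm_of_nonneg S.wt_nonneg hS)).symm

lemma Rep.B_mul {R S : Rep d} (hR : R.Good) (hS : S.Good) :
    (R.mul S).B = R.B * S.A + R.A * S.B := by
  have h1 : Summable fun p : R.ι × S.ι => ((R.deg p.1 : ℝ) * R.wt p.1) * S.wt p.2 :=
    hR.2.mul_of_nonneg hS.1 R.degwt_nonneg S.wt_nonneg
  have h2 : Summable fun p : R.ι × S.ι => R.wt p.1 * ((S.deg p.2 : ℝ) * S.wt p.2) :=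
    hR.1.mul_of_nonneg hS.2 R.wt_nonneg S.degwt_nonneg
  have e : ∀ p : R.ι × S.ι, ((R.mul S).deg p : ℝ) * (R.mul S).wt p =
      ((R.deg p.1 : ℝ) * R.wt p.1) * S.wt p.2 + R.wt p.1 * ((S.deg p.2 : ℝ) * S.wt p.2) := by
    intro p
    rw [Rep.wt_mul]
    show ((R.deg p.1 + S.deg p.2 : ℕ) : ℝ) * _ = _
    push_cast
    ring
  have e0 : (R.mul S).B = ∑' p : R.ι × S.ι,
      (((R.deg p.1 : ℝ) * R.wt p.1) * S.wt p.2 + R.wt p.1 * ((S.deg p.2 : ℝ) * S.wt p.2)) :=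
    tsum_congr e
  rw [e0, Summable.tsum_add h1 h2]
  congr 1
  · exact (tsum_mul_tsum_of_summable_norm
      (summable_norm_of_nonneg R.degwt_nonneg hR.2)
      (summable_norm_of_nonneg S.wt_nonneg hS.1)).symm
  · exact (tsum_mul_tsum_of_summable_norm
      (summable_norm_of_nonneg R.wt_nonneg hR.1)
      (summable_norm_of_nonneg S.degwt_nonneg hS.2)).symm

lemma Rep.Z_mul {R S : Rep d} (hR : Summable R.wt) (hS : Summable S.wt) :
    (R.mul S).Z = R.Z * S.Z := by
  have e : ∀ p : R.ι × S.ι,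
      (if (R.mul S).deg p = 0 then (R.mul S).wt p else 0) =
      (if R.deg p.1 = 0 then R.wt p.1 else 0) * (if S.deg p.2 = 0 then S.wt p.2 else 0) := by
    intro p
    have hd : (R.mul S).deg p = R.deg p.1 + S.deg p.2 := rfl
    by_cases h1 : R.deg p.1 = 0 <;> by_cases h2 : S.deg p.2 = 0 <;>
      simp [hd, h1, h2, Rep.wt_mul]
  have e0 : (R.mul S).Z = ∑' p : R.ι × S.ι,
      ((if R.deg p.1 = 0 then R.wt p.1 else 0) * (if S.deg p.2 = 0 then S.wt p.2 else 0)) :=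
    tsum_congr e
  rw [e0]
  exact (tsum_mul_tsum_of_summable_norm
    (summable_norm_of_nonneg R.zwt_nonneg (Rep.summable_zwt hR))
    (summable_norm_of_nonneg S.zwt_nonneg (Rep.summable_zwt hS))).symm

lemma Rep.val_mul {R S : Rep d} (hR : Summable R.wt) (hS : Summable S.wt)
    {z : EuclideanSpace ℝ (Fin d)} (hz : ‖z‖ ≤ 1) :
    (R.mul S).val z = R.val z * S.val z := by
  have e : ∀ p : R.ι × S.ι,
      (R.mul S).coef p * ∏ j, ⟪(R.mul S).vec p j, z⟫ =
      (R.coef p.1 * ∏ j, ⟪R.vec p.1 j, z⟫) * (S.coef p.2 * ∏ j, ⟪S.vec p.2 j, z⟫) := by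
    intro p
    have h := prod_append_apply (R.vec p.1) (S.vec p.2) (fun w => (⟪w, z⟫ : ℝ))
    have h2 : (R.mul S).coef p * ∏ j, ⟪(R.mul S).vec p j, z⟫ =
        R.coef p.1 * S.coef p.2 *
          ((∏ j, ⟪R.vec p.1 j, z⟫) * ∏ j, ⟪S.vec p.2 j, z⟫) :=
      congrArg (fun t => R.coef p.1 * S.coef p.2 * t) h
    rw [h2]
    ring
  have e0 : (R.mul S).val z = ∑' p : R.ι × S.ι,
      ((R.coef p.1 * ∏ j, ⟪R.vec p.1 j, z⟫) * (S.coef p.2 * ∏ j, ⟪S.vec p.2 j, z⟫)) :=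
    tsum_congr e
  rw [e0]
  refine (tsum_mul_tsum_of_summable_norm
    (f := fun i => R.coef i * ∏ j, ⟪R.vec i j, z⟫)
    (g := fun i => S.coef i * ∏ j, ⟪S.vec i j, z⟫) ?_ ?_).symm
  · exact Summable.of_nonneg_of_le (fun _ => norm_nonneg _)
      (fun i => by rw [Real.norm_eq_abs]; exact R.abs_term_le hz i) hR
  · exact Summable.of_nonneg_of_le (fun _ => norm_nonneg _)
      (fun i => by rw [Real.norm_eq_abs]; exact S.abs_term_le hz i) hS

/-! ### Scalar multiples -/

def Rep.smul (t : ℝ) (R : Rep d) : Rep d := ⟨R.ι, R.deg, fun i => t * R.coef i, R.vec⟩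

lemma Rep.wt_smul (t : ℝ) (R : Rep d) (i : R.ι) : (R.smul t).wt i = |t| * R.wt i := by
  show |t * R.coef i| * (∏ j : Fin (R.deg i), ‖R.vec i j‖) = _
  rw [abs_mul, Rep.wt, mul_assoc]

lemma Rep.good_smul (t : ℝ) {R : Rep d} (hR : R.Good) : (R.smul t).Good := by
  constructor
  · exact (hR.1.mul_left |t|).congr fun i => (R.wt_smul t i).symm
  · refine (hR.2.mul_left |t|).congr fun i => ?_
    rw [Rep.wt_smul]
    show |t| * ((R.deg i : ℝ) * R.wt i) = ((R.smul t).deg i : ℝ) * (|t| * R.wt i)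
    show |t| * ((R.deg i : ℝ) * R.wt i) = (R.deg i : ℝ) * (|t| * R.wt i)
    ring

lemma Rep.A_smul (t : ℝ) (R : Rep d) : (R.smul t).A = |t| * R.A := by
  rw [Rep.A, Rep.A, ← tsum_mul_left]
  exact tsum_congr fun i => R.wt_smul t i

lemma Rep.B_smul (t : ℝ) (R : Rep d) : (R.smul t).B = |t| * R.B := by
  rw [Rep.B, Rep.B, ← tsum_mul_left]
  refine tsum_congr fun i => ?_
  refine (congrArg (fun w => ((R.smul t).deg i : ℝ) * w) (Rep.wt_smul t R i)).trans ?_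
  show (R.deg i : ℝ) * (|t| * R.wt i) = |t| * ((R.deg i : ℝ) * R.wt i)
  ring

lemma Rep.Z_smul (t : ℝ) (R : Rep d) : (R.smul t).Z = |t| * R.Z := by
  rw [Rep.Z, Rep.Z, ← tsum_mul_left]
  refine tsum_congr fun i => ?_
  show (if R.deg i = 0 then (R.smul t).wt i else 0) = |t| * (if R.deg i = 0 then R.wt i else 0)
  refine (congrArg (fun w => if R.deg i = 0 then w else 0) (Rep.wt_smul t R i)).trans ?_
  rw [mul_ite, mul_zero]

lemma Rep.val_smul (t : ℝ) (R : Rep d) (z : EuclideanSpace ℝ (Fin d)) :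
    (R.smul t).val z = t * R.val z := by
  have e0 : (R.smul t).val z = ∑' i : R.ι, t * (R.coef i * ∏ j, ⟪R.vec i j, z⟫) :=
    tsum_congr fun i => mul_assoc _ _ _
  rw [e0, Rep.val, tsum_mul_left]

/-! ### Powers -/

noncomputable def Rep.npow (R : Rep d) : ℕ → Rep d
  | 0 => Rep.one
  | j + 1 => (R.npow j).mul R

lemma Rep.good_npow {R : Rep d} (hR : R.Good) : ∀ j, (R.npow j).Good
  | 0 => Rep.good_one
  | j + 1 => Rep.good_mul (R.good_npow hR j) hR

lemma Rep.A_npow {R : Rep d} (hR : R.Good) : ∀ j, (R.npow j).A = R.A ^ j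
  | 0 => by rw [Rep.npow, Rep.A_one, pow_zero]
  | j + 1 => by
      rw [Rep.npow, Rep.A_mul (R.good_npow hR j).1 hR.1, Rep.A_npow hR j, pow_succ]

lemma Rep.Z_npow {R : Rep d} (hR : R.Good) : ∀ j, (R.npow j).Z = R.Z ^ j
  | 0 => by rw [Rep.npow, Rep.Z_one, pow_zero]
  | j + 1 => by
      rw [Rep.npow, Rep.Z_mul (R.good_npow hR j).1 hR.1, Rep.Z_npow hR j, pow_succ]

lemma Rep.val_npow {R : Rep d} (hR : R.Good) {z : EuclideanSpace ℝ (Fin d)} (hz : ‖z‖ ≤ 1) :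
    ∀ j, (R.npow j).val z = (R.val z) ^ j
  | 0 => by rw [Rep.npow, Rep.val_one, pow_zero]
  | j + 1 => by
      rw [Rep.npow, Rep.val_mul (R.good_npow hR j).1 hR.1 hz, Rep.val_npow hR hz j, pow_succ]

lemma Rep.B_npow {R : Rep d} (hR : R.Good) :
    ∀ j, (R.npow j).B ≤ (j : ℝ) * R.A ^ (j - 1) * R.B
  | 0 => by
      rw [Rep.npow, Rep.B_one]
      simp
  | j + 1 => by
      rw [Rep.npow, Rep.B_mul (R.good_npow hR j) hR]
      have h1 : (R.npow j).B ≤ (j : ℝ) * R.A ^ (j - 1) * R.B := Rep.B_npow hR j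
      have h2 : (R.npow j).A = R.A ^ j := Rep.A_npow hR j
      have hA : 0 ≤ R.A := R.A_nonneg
      have hB : 0 ≤ R.B := R.B_nonneg
      have key : (j : ℝ) * R.A ^ (j - 1) * R.B * R.A + R.A ^ j * R.B =
          ((j + 1 : ℕ) : ℝ) * R.A ^ ((j + 1) - 1) * R.B := by
        rcases j with _ | m
        · simp
        · push_cast
          rw [pow_succ]
          ring
      calc (R.npow j).B * R.A + (R.npow j).A * R.B
          ≤ (j : ℝ) * R.A ^ (j - 1) * R.B * R.A + R.A ^ j * R.B := by
            rw [h2]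
            exact add_le_add (mul_le_mul_of_nonneg_right h1 hA) le_rfl
        _ = ((j + 1 : ℕ) : ℝ) * R.A ^ ((j + 1) - 1) * R.B := key



/-! ### Representations from power-series families -/

lemma tsum_cmul {ι : Type*} {f : ι → ℝ} (c : ℝ) (hf : Summable f) :
    ∑' i, c * f i = c * ∑' i, f i := (hf.hasSum.mul_left c).tsum_eq

def Rep.ofFamily (a : ℕ → ℕ → ℝ)
    (β : (k : ℕ) → ℕ → Fin k → EuclideanSpace ℝ (Fin d)) : Rep d :=
  ⟨ℕ × ℕ, Prod.fst, fun p => a p.1 p.2, fun p => β p.1 p.2⟩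

section Family

variable (cf : ℕ → ℕ → ℝ) (bv : (k : ℕ) → ℕ → Fin k → EuclideanSpace ℝ (Fin d))

lemma famwt_nonneg : ∀ p : ℕ × ℕ, 0 ≤ |cf p.1 p.2| * ∏ i : Fin p.1, ‖bv p.1 p.2 i‖ :=
  fun _ => mul_nonneg (abs_nonneg _) (Finset.prod_nonneg fun _ _ => norm_nonneg _)

variable (haux : ∀ k : ℕ, Summable (fun v : ℕ => |cf k v| * ∏ i : Fin k, ‖bv k v i‖))
variable (h1 : Summable (fun k : ℕ => auxCoef d cf bv k))
variable (h1' : Summable (fun k : ℕ => (k : ℝ) * auxCoef d cf bv k))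

include haux h1 in
lemma Rep.summable_wt_ofFamily : Summable (Rep.ofFamily cf bv).wt := by
  show Summable fun p : ℕ × ℕ => |cf p.1 p.2| * ∏ i : Fin p.1, ‖bv p.1 p.2 i‖
  exact (summable_prod_of_nonneg (famwt_nonneg cf bv)).2 ⟨fun k => haux k, h1⟩

include haux h1' in
lemma Rep.summable_degwt_ofFamily :
    Summable fun p : ℕ × ℕ =>
      (((Rep.ofFamily cf bv).deg p : ℝ)) * (Rep.ofFamily cf bv).wt p := by
  show Summable fun p : ℕ × ℕ => (p.1 : ℝ) * (|cf p.1 p.2| * ∏ i : Fin p.1, ‖bv p.1 p.2 i‖)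
  refine (summable_prod_of_nonneg
      (fun p => mul_nonneg (Nat.cast_nonneg _) (famwt_nonneg cf bv p))).2
    ⟨fun k => Summable.mul_left ((k : ℝ)) (haux k), ?_⟩
  refine h1'.congr fun k => ?_
  rw [auxCoef, ← tsum_cmul (k : ℝ) (haux k)]

include haux h1 h1' in
lemma Rep.good_ofFamily : (Rep.ofFamily cf bv).Good :=
  ⟨Rep.summable_wt_ofFamily cf bv haux h1, Rep.summable_degwt_ofFamily cf bv haux h1'⟩

include haux h1 in
lemma Rep.A_ofFamily : (Rep.ofFamily cf bv).A = ∑' k : ℕ, auxCoef d cf bv k := by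
  show (∑' p : ℕ × ℕ, |cf p.1 p.2| * ∏ i : Fin p.1, ‖bv p.1 p.2 i‖) = _
  rw [Summable.tsum_prod' ((summable_prod_of_nonneg (famwt_nonneg cf bv)).2 ⟨fun k => haux k, h1⟩)
    fun k => haux k]
  exact tsum_congr fun k => by rw [auxCoef]

include haux h1' in
lemma Rep.B_ofFamily : (Rep.ofFamily cf bv).B = ∑' k : ℕ, (k : ℝ) * auxCoef d cf bv k := by
  show (∑' p : ℕ × ℕ, (p.1 : ℝ) * (|cf p.1 p.2| * ∏ i : Fin p.1, ‖bv p.1 p.2 i‖)) = _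
  have hs : Summable fun p : ℕ × ℕ =>
      (p.1 : ℝ) * (|cf p.1 p.2| * ∏ i : Fin p.1, ‖bv p.1 p.2 i‖) := by
    refine (summable_prod_of_nonneg
        (fun p => mul_nonneg (Nat.cast_nonneg _) (famwt_nonneg cf bv p))).2
      ⟨fun k => Summable.mul_left ((k : ℝ)) (haux k), ?_⟩
    refine h1'.congr fun k => ?_
    rw [auxCoef, ← tsum_cmul (k : ℝ) (haux k)]
  rw [Summable.tsum_prod' hs fun k => Summable.mul_left ((k : ℝ)) (haux k)]
  refine tsum_congr fun k => ?_
  rw [auxCoef, ← tsum_cmul (k : ℝ) (haux k)]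

include haux h1 in
lemma Rep.Z_ofFamily : (Rep.ofFamily cf bv).Z = auxCoef d cf bv 0 := by
  show (∑' p : ℕ × ℕ,
      if p.1 = 0 then |cf p.1 p.2| * ∏ i : Fin p.1, ‖bv p.1 p.2 i‖ else 0) = _
  have hb : ∀ p : ℕ × ℕ,
      (if p.1 = 0 then |cf p.1 p.2| * ∏ i : Fin p.1, ‖bv p.1 p.2 i‖ else 0)
        ≤ |cf p.1 p.2| * ∏ i : Fin p.1, ‖bv p.1 p.2 i‖ := by
    intro p
    split
    · exact le_rfl
    · exact famwt_nonneg cf bv p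
  have hnn : ∀ p : ℕ × ℕ,
      0 ≤ (if p.1 = 0 then |cf p.1 p.2| * ∏ i : Fin p.1, ‖bv p.1 p.2 i‖ else 0) := by
    intro p
    split
    · exact famwt_nonneg cf bv p
    · exact le_rfl
  have hsz : Summable fun p : ℕ × ℕ =>
      (if p.1 = 0 then |cf p.1 p.2| * ∏ i : Fin p.1, ‖bv p.1 p.2 i‖ else 0) :=
    Summable.of_nonneg_of_le hnn hb
      ((summable_prod_of_nonneg (famwt_nonneg cf bv)).2 ⟨fun k => haux k, h1⟩)
  have hszf : ∀ k : ℕ, Summable fun v : ℕ =>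
      (if k = 0 then |cf k v| * ∏ i : Fin k, ‖bv k v i‖ else 0) := by
    intro k
    split
    · exact haux k
    · exact summable_zero
  rw [Summable.tsum_prod' hsz hszf]
  have e : ∀ k : ℕ, (∑' v : ℕ,
      (if k = 0 then |cf k v| * ∏ i : Fin k, ‖bv k v i‖ else 0)) =
      (if k = 0 then auxCoef d cf bv 0 else 0) := by
    intro k
    by_cases hk : k = 0
    · subst hk
      rw [if_pos rfl, auxCoef]
      exact tsum_congr fun v => by rw [if_pos rfl]
    · rw [if_neg hk]
      have : ∀ v : ℕ,
          (if k = 0 then |cf k v| * ∏ i : Fin k, ‖bv k v i‖ else 0) = 0 :=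
        fun v => if_neg hk
      rw [tsum_congr this, tsum_zero]
  rw [tsum_congr e, tsum_ite_eq]

include haux h1 in
lemma Rep.val_ofFamily {z : EuclideanSpace ℝ (Fin d)} (hz : ‖z‖ ≤ 1) :
    (Rep.ofFamily cf bv).val z = familyFun d cf bv z := by
  show (∑' p : ℕ × ℕ, cf p.1 p.2 * ∏ i : Fin p.1, ⟪bv p.1 p.2 i, z⟫) = _
  have hs : Summable fun p : ℕ × ℕ => cf p.1 p.2 * ∏ i : Fin p.1, ⟪bv p.1 p.2 i, z⟫ :=
    (Rep.ofFamily cf bv).summable_term (Rep.summable_wt_ofFamily cf bv haux h1) hz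
  have hsf : ∀ k : ℕ, Summable fun v : ℕ => cf k v * ∏ i : Fin k, ⟪bv k v i, z⟫ := by
    intro k
    refine Summable.of_abs (Summable.of_nonneg_of_le (fun v => abs_nonneg _)
      (fun v => (Rep.ofFamily cf bv).abs_term_le hz (k, v)) (haux k))
  rw [Summable.tsum_prod' hs hsf, familyFun]

end Family



/-! ### Sums of representations indexed by `ℕ × ℕ` -/

def Rep.sigmaP (R : ℕ × ℕ → Rep d) : Rep d :=
  ⟨(p : ℕ × ℕ) × (R p).ι, fun q => (R q.1).deg q.2, fun q => (R q.1).coef q.2,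
    fun q => (R q.1).vec q.2⟩

section Sigma

variable (R : ℕ × ℕ → Rep d)

lemma Rep.wt_sigmaP (q : (p : ℕ × ℕ) × (R p).ι) :
    (Rep.sigmaP R).wt q = (R q.1).wt q.2 := rfl

lemma Rep.degwt_sigmaP (q : (p : ℕ × ℕ) × (R p).ι) :
    ((Rep.sigmaP R).deg q : ℝ) * (Rep.sigmaP R).wt q
      = ((R q.1).deg q.2 : ℝ) * (R q.1).wt q.2 := rfl

lemma Rep.zwt_sigmaP (q : (p : ℕ × ℕ) × (R p).ι) :
    (if (Rep.sigmaP R).deg q = 0 then (Rep.sigmaP R).wt q else 0)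
      = (if (R q.1).deg q.2 = 0 then (R q.1).wt q.2 else 0) := rfl

lemma Rep.term_sigmaP (z : EuclideanSpace ℝ (Fin d)) (q : (p : ℕ × ℕ) × (R p).ι) :
    (Rep.sigmaP R).coef q * ∏ j, ⟪(Rep.sigmaP R).vec q j, z⟫
      = (R q.1).coef q.2 * ∏ j, ⟪(R q.1).vec q.2 j, z⟫ := rfl

lemma Rep.summable_wt_sigmaP (h : ∀ p, Summable (R p).wt)
    (h2 : Summable fun p => (R p).A) : Summable (Rep.sigmaP R).wt := by
  refine Summable.congr ?_ fun q => (Rep.wt_sigmaP R q).symm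
  exact (summable_sigma_of_nonneg
      (f := fun q : (p : ℕ × ℕ) × (R p).ι => (R q.1).wt q.2)
      (fun q => (R q.1).wt_nonneg q.2)).2
    ⟨fun p => (h p).congr fun i => rfl, h2.congr fun p => tsum_congr fun i => rfl⟩

lemma Rep.summable_degwt_sigmaP (h : ∀ p, (R p).Good)
    (h2 : Summable fun p => (R p).B) :
    Summable fun q => ((Rep.sigmaP R).deg q : ℝ) * (Rep.sigmaP R).wt q := by
  refine Summable.congr ?_ fun q => (Rep.degwt_sigmaP R q).symm
  exact (summable_sigma_of_nonneg
      (f := fun q : (p : ℕ × ℕ) × (R p).ι => ((R q.1).deg q.2 : ℝ) * (R q.1).wt q.2)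
      (fun q => (R q.1).degwt_nonneg q.2)).2
    ⟨fun p => ((h p).2).congr fun i => rfl, h2.congr fun p => tsum_congr fun i => rfl⟩

lemma Rep.good_sigmaP (h : ∀ p, (R p).Good) (h2 : Summable fun p => (R p).A)
    (h3 : Summable fun p => (R p).B) : (Rep.sigmaP R).Good :=
  ⟨Rep.summable_wt_sigmaP R (fun p => (h p).1) h2, Rep.summable_degwt_sigmaP R h h3⟩

lemma Rep.A_sigmaP (h : ∀ p, Summable (R p).wt) (h2 : Summable fun p => (R p).A) :
    (Rep.sigmaP R).A = ∑' p : ℕ × ℕ, (R p).A := by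
  have e0 : (Rep.sigmaP R).A
      = ∑' q : (p : ℕ × ℕ) × (R p).ι, (R q.1).wt q.2 := tsum_congr (Rep.wt_sigmaP R)
  rw [e0, Summable.tsum_sigma' (fun p => (h p).congr fun i => rfl)
    (((Rep.summable_wt_sigmaP R h h2).congr fun q => Rep.wt_sigmaP R q))]
  exact tsum_congr fun p => (tsum_congr fun i => rfl).symm

lemma Rep.B_sigmaP (h : ∀ p, (R p).Good) (h2 : Summable fun p => (R p).B) :
    (Rep.sigmaP R).B = ∑' p : ℕ × ℕ, (R p).B := by
  have e0 : (Rep.sigmaP R).B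
      = ∑' q : (p : ℕ × ℕ) × (R p).ι, ((R q.1).deg q.2 : ℝ) * (R q.1).wt q.2 :=
    tsum_congr (Rep.degwt_sigmaP R)
  rw [e0, Summable.tsum_sigma' (fun p => ((h p).2).congr fun i => rfl)
    ((Rep.summable_degwt_sigmaP R h h2).congr fun q => Rep.degwt_sigmaP R q)]
  exact tsum_congr fun p => (tsum_congr fun i => rfl).symm

lemma Rep.Z_sigmaP (h : ∀ p, Summable (R p).wt) (h2 : Summable fun p => (R p).A) :
    (Rep.sigmaP R).Z = ∑' p : ℕ × ℕ, (R p).Z := by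
  have e0 : (Rep.sigmaP R).Z
      = ∑' q : (p : ℕ × ℕ) × (R p).ι,
          (if (R q.1).deg q.2 = 0 then (R q.1).wt q.2 else 0) :=
    tsum_congr (Rep.zwt_sigmaP R)
  have hs : Summable fun q : (p : ℕ × ℕ) × (R p).ι =>
      (if (R q.1).deg q.2 = 0 then (R q.1).wt q.2 else 0) := by
    refine Summable.of_nonneg_of_le (fun q => (R q.1).zwt_nonneg q.2)
      (fun q => (R q.1).zwt_le_wt q.2) ?_
    exact (Rep.summable_wt_sigmaP R h h2).congr fun q => Rep.wt_sigmaP R q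
  rw [e0, Summable.tsum_sigma' (fun p => (Rep.summable_zwt (h p)).congr fun i => rfl) hs]
  exact tsum_congr fun p => (tsum_congr fun i => rfl).symm

lemma Rep.val_sigmaP (h : ∀ p, Summable (R p).wt) (h2 : Summable fun p => (R p).A)
    {z : EuclideanSpace ℝ (Fin d)} (hz : ‖z‖ ≤ 1) :
    (Rep.sigmaP R).val z = ∑' p : ℕ × ℕ, (R p).val z := by
  have e0 : (Rep.sigmaP R).val z
      = ∑' q : (p : ℕ × ℕ) × (R p).ι, (R q.1).coef q.2 * ∏ j, ⟪(R q.1).vec q.2 j, z⟫ :=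
    tsum_congr (Rep.term_sigmaP R z)
  have hs : Summable fun q : (p : ℕ × ℕ) × (R p).ι =>
      (R q.1).coef q.2 * ∏ j, ⟪(R q.1).vec q.2 j, z⟫ :=
    ((Rep.sigmaP R).summable_term (Rep.summable_wt_sigmaP R h h2) hz).congr
      fun q => Rep.term_sigmaP R z q
  rw [e0, Summable.tsum_sigma' (fun p => ((R p).summable_term (h p) hz).congr fun i => rfl) hs]
  exact tsum_congr fun p => (tsum_congr fun i => rfl).symm

end Sigma


variable {n : ℕ}

lemma inner_eq_sum (w z : EuclideanSpace ℝ (Fin d)) : ⟪w, z⟫ = ∑ j, w j * z j := by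
  simp [PiLp.inner_apply, RCLike.inner_apply, conj_trivial]
  exact Finset.sum_congr rfl fun j _ => mul_comm _ _

lemma norm_sq_eq (w : EuclideanSpace ℝ (Fin d)) : ‖w‖ ^ 2 = ∑ j, (w j) ^ 2 := by
  rw [EuclideanSpace.norm_eq, Real.sq_sqrt (Finset.sum_nonneg fun j _ => sq_nonneg _)]
  exact Finset.sum_congr rfl fun j _ => by rw [Real.norm_eq_abs, sq_abs]

noncomputable def Qm (x : Fin n → EuclideanSpace ℝ (Fin d)) (u : Fin n → ℝ) (m : ℕ) : ℝ :=
  ∑ a, ∑ c, u a * u c * ⟪x a, x c⟫ ^ m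

lemma Qm_eq_sum_sq (x : Fin n → EuclideanSpace ℝ (Fin d)) (u : Fin n → ℝ) (m : ℕ) :
    Qm x u m = ∑ t : Fin m → Fin d, (∑ a, u a * ∏ i, x a (t i)) ^ 2 := by
  have hip : ∀ a c : Fin n, ⟪x a, x c⟫ ^ m
      = ∑ t : Fin m → Fin d, ∏ i, (x a (t i) * x c (t i)) := by
    intro a c
    rw [inner_eq_sum]
    calc (∑ j, x a j * x c j) ^ m = ∏ _i : Fin m, (∑ j, x a j * x c j) := by
          rw [Finset.prod_const, Finset.card_univ, Fintype.card_fin]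
      _ = ∑ t ∈ Fintype.piFinset (fun _ : Fin m => Finset.univ),
            ∏ i, (x a (t i) * x c (t i)) := Finset.prod_univ_sum _ _
      _ = ∑ t : Fin m → Fin d, ∏ i, (x a (t i) * x c (t i)) := by
          rw [Fintype.piFinset_univ]
  calc Qm x u m
      = ∑ a, ∑ c, ∑ t : Fin m → Fin d, u a * u c * ∏ i, (x a (t i) * x c (t i)) := by
        refine Finset.sum_congr rfl fun a _ => Finset.sum_congr rfl fun c _ => ?_
        rw [hip a c, Finset.mul_sum]
    _ = ∑ a, ∑ t : Fin m → Fin d, ∑ c, u a * u c * ∏ i, (x a (t i) * x c (t i)) :=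
        Finset.sum_congr rfl fun a _ => Finset.sum_comm
    _ = ∑ t : Fin m → Fin d, ∑ a, ∑ c, u a * u c * ∏ i, (x a (t i) * x c (t i)) :=
        Finset.sum_comm
    _ = ∑ t : Fin m → Fin d, (∑ a, u a * ∏ i, x a (t i)) ^ 2 := by
        refine Finset.sum_congr rfl fun t _ => ?_
        rw [sq, Finset.sum_mul_sum]
        refine Finset.sum_congr rfl fun a _ => Finset.sum_congr rfl fun c _ => ?_
        rw [Finset.prod_mul_distrib]
        ring

lemma Qm_nonneg (x : Fin n → EuclideanSpace ℝ (Fin d)) (u : Fin n → ℝ) (m : ℕ) :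
    0 ≤ Qm x u m := by
  rw [Qm_eq_sum_sq]
  exact Finset.sum_nonneg fun t _ => sq_nonneg _

lemma monomial_bound (x : Fin n → EuclideanSpace ℝ (Fin d)) (u : Fin n → ℝ) {m : ℕ}
    (w : Fin m → EuclideanSpace ℝ (Fin d)) :
    |∑ a, u a * ∏ i, ⟪w i, x a⟫| ≤ (∏ i, ‖w i‖) * Real.sqrt (Qm x u m) := by
  have expand : (∑ a, u a * ∏ i, ⟪w i, x a⟫)
      = ∑ t : Fin m → Fin d, (∏ i, w i (t i)) * (∑ a, u a * ∏ i, x a (t i)) := by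
    have hprod : ∀ a : Fin n, (∏ i, ⟪w i, x a⟫)
        = ∑ t : Fin m → Fin d, ∏ i, (w i (t i) * x a (t i)) := by
      intro a
      calc (∏ i, ⟪w i, x a⟫) = ∏ i, ∑ j, w i j * x a j :=
            Finset.prod_congr rfl fun i _ => inner_eq_sum _ _
        _ = ∑ t ∈ Fintype.piFinset (fun _ : Fin m => Finset.univ),
              ∏ i, (w i (t i) * x a (t i)) := Finset.prod_univ_sum _ _
        _ = ∑ t : Fin m → Fin d, ∏ i, (w i (t i) * x a (t i)) := by
            rw [Fintype.piFinset_univ]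
    calc (∑ a, u a * ∏ i, ⟪w i, x a⟫)
        = ∑ a, ∑ t : Fin m → Fin d, u a * ∏ i, (w i (t i) * x a (t i)) := by
          refine Finset.sum_congr rfl fun a _ => ?_
          rw [hprod a, Finset.mul_sum]
      _ = ∑ t : Fin m → Fin d, ∑ a, u a * ∏ i, (w i (t i) * x a (t i)) :=
          Finset.sum_comm
      _ = ∑ t : Fin m → Fin d, (∏ i, w i (t i)) * (∑ a, u a * ∏ i, x a (t i)) := by
          refine Finset.sum_congr rfl fun t _ => ?_
          rw [Finset.mul_sum]
          refine Finset.sum_congr rfl fun a _ => ?_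
          rw [Finset.prod_mul_distrib]
          ring
  have hW : (∑ t : Fin m → Fin d, (∏ i, w i (t i)) ^ 2) = (∏ i, ‖w i‖) ^ 2 := by
    calc (∑ t : Fin m → Fin d, (∏ i, w i (t i)) ^ 2)
        = ∑ t : Fin m → Fin d, ∏ i, (w i (t i)) ^ 2 :=
          Finset.sum_congr rfl fun t _ => (Finset.prod_pow _ _ _).symm
      _ = ∑ t ∈ Fintype.piFinset (fun _ : Fin m => Finset.univ), ∏ i, (w i (t i)) ^ 2 := by
          rw [Fintype.piFinset_univ]
      _ = ∏ i, ∑ j, (w i j) ^ 2 :=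
          (Finset.prod_univ_sum (fun _ : Fin m => Finset.univ) (fun i j => w i j ^ 2)).symm
      _ = ∏ i, ‖w i‖ ^ 2 := Finset.prod_congr rfl fun i _ => (norm_sq_eq (w i)).symm
      _ = (∏ i, ‖w i‖) ^ 2 := Finset.prod_pow _ _ _
  have cs := Finset.sum_mul_sq_le_sq_mul_sq Finset.univ
    (fun t : Fin m → Fin d => ∏ i, w i (t i))
    (fun t : Fin m → Fin d => ∑ a, u a * ∏ i, x a (t i))
  rw [expand]
  have h1 : |∑ t : Fin m → Fin d, (∏ i, w i (t i)) * (∑ a, u a * ∏ i, x a (t i))|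
      = Real.sqrt ((∑ t : Fin m → Fin d, (∏ i, w i (t i)) * (∑ a, u a * ∏ i, x a (t i))) ^ 2) := by
    rw [Real.sqrt_sq_eq_abs]
  rw [h1]
  have h2 : ((∑ t : Fin m → Fin d, (∏ i, w i (t i)) * (∑ a, u a * ∏ i, x a (t i))) ^ 2)
      ≤ (∏ i, ‖w i‖) ^ 2 * Qm x u m := by
    calc ((∑ t : Fin m → Fin d, (∏ i, w i (t i)) * (∑ a, u a * ∏ i, x a (t i))) ^ 2)
        ≤ (∑ t : Fin m → Fin d, (∏ i, w i (t i)) ^ 2) *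
            (∑ t : Fin m → Fin d, (∑ a, u a * ∏ i, x a (t i)) ^ 2) := cs
      _ = (∏ i, ‖w i‖) ^ 2 * Qm x u m := by rw [hW, ← Qm_eq_sum_sq]
  calc Real.sqrt ((∑ t : Fin m → Fin d, (∏ i, w i (t i)) * (∑ a, u a * ∏ i, x a (t i))) ^ 2)
      ≤ Real.sqrt ((∏ i, ‖w i‖) ^ 2 * Qm x u m) := Real.sqrt_le_sqrt h2
    _ = (∏ i, ‖w i‖) * Real.sqrt (Qm x u m) := by
        rw [Real.sqrt_mul (sq_nonneg _), Real.sqrt_sq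
          (Finset.prod_nonneg fun i _ => norm_nonneg _)]

section Kernel

variable (x : Fin n → EuclideanSpace ℝ (Fin d)) (hx : ∀ a, ‖x a‖ = 1)
variable (b : ℕ → ℝ) (hb0 : 1 ≤ b 0) (hbk : ∀ k : ℕ, 1 ≤ k → 1 / (k : ℝ) ^ 2 ≤ b k)
variable (hb_sum : Summable b)
variable (H : Matrix (Fin n) (Fin n) ℝ)
variable (hH : ∀ a c, H a c = ∑' k : ℕ, b k * ⟪x a, x c⟫ ^ k)

include hb0 hbk in
lemma b_nonneg : ∀ k, 0 ≤ b k := by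
  intro k
  rcases Nat.eq_zero_or_pos k with hk | hk
  · subst hk; linarith
  · have := hbk k hk
    have h2 : (0 : ℝ) ≤ 1 / (k : ℝ) ^ 2 := by positivity
    linarith

include hx in
lemma abs_ip_le_one : ∀ a c : Fin n, |⟪x a, x c⟫| ≤ 1 := by
  intro a c
  calc |⟪x a, x c⟫| ≤ ‖x a‖ * ‖x c‖ := abs_real_inner_le_norm _ _
    _ = 1 := by rw [hx a, hx c, mul_one]

include hx hb0 hbk hb_sum in
lemma summable_bip (a c : Fin n) : Summable fun k : ℕ => b k * ⟪x a, x c⟫ ^ k := by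
  refine Summable.of_abs (Summable.of_nonneg_of_le (fun k => abs_nonneg _) (fun k => ?_) hb_sum)
  rw [abs_mul, abs_of_nonneg (b_nonneg b hb0 hbk k), abs_pow]
  calc b k * |⟪x a, x c⟫| ^ k ≤ b k * 1 := by
        refine mul_le_mul_of_nonneg_left ?_ (b_nonneg b hb0 hbk k)
        exact pow_le_one₀ (abs_nonneg _) (abs_ip_le_one x hx a c)
    _ = b k := mul_one _

include hx hb0 hbk hb_sum in
lemma summable_bQ (u : Fin n → ℝ) : Summable fun k : ℕ => b k * Qm x u k := by
  have : ∀ k : ℕ, b k * Qm x u k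
      = ∑ a, ∑ c, u a * u c * (b k * ⟪x a, x c⟫ ^ k) := by
    intro k
    rw [Qm, Finset.mul_sum]
    refine Finset.sum_congr rfl fun a _ => ?_
    rw [Finset.mul_sum]
    exact Finset.sum_congr rfl fun c _ => by ring
  refine Summable.congr ?_ fun k => (this k).symm
  refine summable_sum fun a _ => summable_sum fun c _ => ?_
  exact ((summable_bip x hx b hb0 hbk hb_sum a c).mul_left _)

include hx hb0 hbk hb_sum hH in
lemma quad_form_eq (u : Fin n → ℝ) : u ⬝ᵥ H *ᵥ u = ∑' k : ℕ, b k * Qm x u k := by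
  have hsbip : ∀ a c : Fin n, Summable fun k : ℕ => u a * u c * (b k * ⟪x a, x c⟫ ^ k) :=
    fun a c => (summable_bip x hx b hb0 hbk hb_sum a c).mul_left _
  calc u ⬝ᵥ H *ᵥ u = ∑ a, ∑ c, u a * (H a c * u c) := by
        simp [dotProduct, mulVec, Finset.mul_sum]
    _ = ∑ a, ∑ c, ∑' k : ℕ, u a * u c * (b k * ⟪x a, x c⟫ ^ k) := by
        refine Finset.sum_congr rfl fun a _ => Finset.sum_congr rfl fun c _ => ?_
        rw [hH a c]
        have e : u a * ((∑' k : ℕ, b k * ⟪x a, x c⟫ ^ k) * u c)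
            = (u a * u c) * ∑' k : ℕ, b k * ⟪x a, x c⟫ ^ k := by ring
        rw [e, ← tsum_cmul (u a * u c) (summable_bip x hx b hb0 hbk hb_sum a c)]
    _ = ∑ a, ∑' k : ℕ, ∑ c, u a * u c * (b k * ⟪x a, x c⟫ ^ k) := by
        refine Finset.sum_congr rfl fun a _ => ?_
        exact (Summable.tsum_finsetSum fun c _ => hsbip a c).symm
    _ = ∑' k : ℕ, ∑ a, ∑ c, u a * u c * (b k * ⟪x a, x c⟫ ^ k) := by
        exact (Summable.tsum_finsetSum fun a _ => summable_sum fun c _ => hsbip a c).symm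
    _ = ∑' k : ℕ, b k * Qm x u k := by
        refine tsum_congr fun k => ?_
        rw [Qm, Finset.mul_sum]
        refine Finset.sum_congr rfl fun a _ => ?_
        rw [Finset.mul_sum]
        exact Finset.sum_congr rfl fun c _ => by ring

end Kernel


noncomputable def kap (m : ℕ) : ℝ := if m = 0 then 1 else (m : ℝ)

lemma kap_nonneg (m : ℕ) : 0 ≤ kap m := by
  rw [kap]; split
  · exact zero_le_one
  · exact Nat.cast_nonneg _

lemma kap_le (m : ℕ) : kap m ≤ (m : ℝ) + (if m = 0 then 1 else 0) := by
  rw [kap]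
  by_cases h : m = 0 <;> simp [h]

section Kernel

variable (x : Fin n → EuclideanSpace ℝ (Fin d)) (hx : ∀ a, ‖x a‖ = 1)
variable (b : ℕ → ℝ) (hb0 : 1 ≤ b 0) (hbk : ∀ k : ℕ, 1 ≤ k → 1 / (k : ℝ) ^ 2 ≤ b k)
variable (hb_sum : Summable b)
variable (H : Matrix (Fin n) (Fin n) ℝ)
variable (hH : ∀ a c, H a c = ∑' k : ℕ, b k * ⟪x a, x c⟫ ^ k)

include hx hb0 hbk hb_sum hH in
lemma quad_nonneg (u : Fin n → ℝ) : 0 ≤ u ⬝ᵥ H *ᵥ u := by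
  rw [quad_form_eq x hx b hb0 hbk hb_sum H hH u]
  exact tsum_nonneg fun k => mul_nonneg (b_nonneg b hb0 hbk k) (Qm_nonneg x u k)

include hx hb0 hbk hb_sum hH in
lemma bQ_le (u : Fin n → ℝ) (m : ℕ) : b m * Qm x u m ≤ u ⬝ᵥ H *ᵥ u := by
  rw [quad_form_eq x hx b hb0 hbk hb_sum H hH u]
  exact Summable.le_tsum (summable_bQ x hx b hb0 hbk hb_sum u) m
    (fun k _ => mul_nonneg (b_nonneg b hb0 hbk k) (Qm_nonneg x u k))

include hx hb0 hbk hb_sum hH in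
lemma sqrt_Qm_le (u : Fin n → ℝ) (m : ℕ) :
    Real.sqrt (Qm x u m) ≤ kap m * Real.sqrt (u ⬝ᵥ H *ᵥ u) := by
  have hkb : 1 ≤ kap m ^ 2 * b m := by
    rcases Nat.eq_zero_or_pos m with hm | hm
    · subst hm
      rw [kap, if_pos rfl, one_pow, one_mul]
      exact hb0
    · have hm0 : m ≠ 0 := Nat.pos_iff_ne_zero.mp hm
      rw [kap, if_neg hm0]
      have hmr : (0 : ℝ) < (m : ℝ) ^ 2 := by positivity
      have := hbk m hm
      calc (1 : ℝ) = (m : ℝ) ^ 2 * (1 / (m : ℝ) ^ 2) := by field_simp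
        _ ≤ (m : ℝ) ^ 2 * b m := by
            exact mul_le_mul_of_nonneg_left this (le_of_lt hmr)
  have hQ : Qm x u m ≤ kap m ^ 2 * (u ⬝ᵥ H *ᵥ u) := by
    calc Qm x u m = 1 * Qm x u m := (one_mul _).symm
      _ ≤ (kap m ^ 2 * b m) * Qm x u m :=
          mul_le_mul_of_nonneg_right hkb (Qm_nonneg x u m)
      _ = kap m ^ 2 * (b m * Qm x u m) := by ring
      _ ≤ kap m ^ 2 * (u ⬝ᵥ H *ᵥ u) :=
          mul_le_mul_of_nonneg_left (bQ_le x hx b hb0 hbk hb_sum H hH u m) (sq_nonneg _)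
  calc Real.sqrt (Qm x u m) ≤ Real.sqrt (kap m ^ 2 * (u ⬝ᵥ H *ᵥ u)) := Real.sqrt_le_sqrt hQ
    _ = kap m * Real.sqrt (u ⬝ᵥ H *ᵥ u) := by
        rw [Real.sqrt_mul (sq_nonneg _), Real.sqrt_sq (kap_nonneg m)]

include hx hb0 hbk hb_sum hH in
lemma rep_bound (R : Rep d) (hR : R.Good) (u : Fin n → ℝ) :
    |∑ a, u a * R.val (x a)| ≤ (R.B + R.Z) * Real.sqrt (u ⬝ᵥ H *ᵥ u) := by
  set r := Real.sqrt (u ⬝ᵥ H *ᵥ u) with hr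
  have hrnn : 0 ≤ r := Real.sqrt_nonneg _
  have hxle : ∀ a : Fin n, ‖x a‖ ≤ 1 := fun a => le_of_eq (hx a)
  -- swap the finite sum and the tsum
  have swap : (∑ a, u a * R.val (x a))
      = ∑' i, R.coef i * ∑ a, u a * ∏ j, ⟪R.vec i j, x a⟫ := by
    calc (∑ a, u a * R.val (x a))
        = ∑ a, ∑' i, u a * (R.coef i * ∏ j, ⟪R.vec i j, x a⟫) := by
          refine Finset.sum_congr rfl fun a _ => ?_
          rw [Rep.val, tsum_cmul (u a) (R.summable_term hR.1 (hxle a))]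
      _ = ∑' i, ∑ a, u a * (R.coef i * ∏ j, ⟪R.vec i j, x a⟫) :=
          (Summable.tsum_finsetSum fun a _ => (R.summable_term hR.1 (hxle a)).mul_left (u a)).symm
      _ = ∑' i, R.coef i * ∑ a, u a * ∏ j, ⟪R.vec i j, x a⟫ := by
          refine tsum_congr fun i => ?_
          rw [Finset.mul_sum]
          exact Finset.sum_congr rfl fun a _ => by ring
  -- pointwise domination
  have dom : ∀ i : R.ι, |R.coef i * ∑ a, u a * ∏ j, ⟪R.vec i j, x a⟫|
      ≤ ((R.deg i : ℝ) * R.wt i + (if R.deg i = 0 then R.wt i else 0)) * r := by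
    intro i
    calc |R.coef i * ∑ a, u a * ∏ j, ⟪R.vec i j, x a⟫|
        = |R.coef i| * |∑ a, u a * ∏ j, ⟪R.vec i j, x a⟫| := abs_mul _ _
      _ ≤ |R.coef i| * ((∏ j, ‖R.vec i j‖) * Real.sqrt (Qm x u (R.deg i))) :=
          mul_le_mul_of_nonneg_left (monomial_bound x u (R.vec i)) (abs_nonneg _)
      _ = R.wt i * Real.sqrt (Qm x u (R.deg i)) := by rw [Rep.wt, mul_assoc]
      _ ≤ R.wt i * (kap (R.deg i) * r) :=
          mul_le_mul_of_nonneg_left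
            (sqrt_Qm_le x hx b hb0 hbk hb_sum H hH u (R.deg i)) (R.wt_nonneg i)
      _ ≤ ((R.deg i : ℝ) * R.wt i + (if R.deg i = 0 then R.wt i else 0)) * r := by
          have h1 : R.wt i * kap (R.deg i)
              ≤ (R.deg i : ℝ) * R.wt i + (if R.deg i = 0 then R.wt i else 0) := by
            calc R.wt i * kap (R.deg i)
                ≤ R.wt i * ((R.deg i : ℝ) + (if R.deg i = 0 then 1 else 0)) :=
                  mul_le_mul_of_nonneg_left (kap_le (R.deg i)) (R.wt_nonneg i)
              _ = (R.deg i : ℝ) * R.wt i + (if R.deg i = 0 then R.wt i else 0) := by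
                  rw [mul_add, mul_ite, mul_one, mul_zero, mul_comm]
            
          calc R.wt i * (kap (R.deg i) * r) = (R.wt i * kap (R.deg i)) * r := by ring
            _ ≤ ((R.deg i : ℝ) * R.wt i + (if R.deg i = 0 then R.wt i else 0)) * r :=
                mul_le_mul_of_nonneg_right h1 hrnn
  have hsum_dom : Summable fun i : R.ι =>
      ((R.deg i : ℝ) * R.wt i + (if R.deg i = 0 then R.wt i else 0)) * r :=
    (hR.2.add (Rep.summable_zwt hR.1)).mul_right r
  have hsum_abs : Summable fun i : R.ι =>
      |R.coef i * ∑ a, u a * ∏ j, ⟪R.vec i j, x a⟫| := by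
    refine Summable.of_nonneg_of_le (fun i => abs_nonneg _) dom hsum_dom
  calc |∑ a, u a * R.val (x a)|
      = |∑' i, R.coef i * ∑ a, u a * ∏ j, ⟪R.vec i j, x a⟫| := by rw [swap]
    _ ≤ ∑' i, |R.coef i * ∑ a, u a * ∏ j, ⟪R.vec i j, x a⟫| := by
        have := norm_tsum_le_tsum_norm (f := fun i : R.ι =>
          R.coef i * ∑ a, u a * ∏ j, ⟪R.vec i j, x a⟫)
          (hsum_abs.congr fun i => (Real.norm_eq_abs _).symm)
        simp only [Real.norm_eq_abs] at this
        exact this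
    _ ≤ ∑' i, ((R.deg i : ℝ) * R.wt i + (if R.deg i = 0 then R.wt i else 0)) * r :=
        Summable.tsum_le_tsum dom hsum_abs hsum_dom
    _ = (R.B + R.Z) * r := by
        rw [tsum_mul_right, Summable.tsum_add hR.2 (Rep.summable_zwt hR.1), Rep.B, Rep.Z]

end Kernel


end Stmt9

open Stmt9

/-- **Bivariate chain rule for learning bounds.**
If `f(s,t) = ∑_{j,k} c_{jk} sʲ tᵏ` is a bivariate power series, `g` and `h` are
given by multivariate power-series families with auxiliary functions `g̃`, `h̃`
(finite at 1 along with their derivatives), `f̃` and its partial derivatives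
converge at `(g̃(1), h̃(1))`, and `y_a = f(g(x_a), h(x_a))`, then
`√(yᵀ H⁻¹ y) ≤ ∂ₛf̃(g̃(1),h̃(1)) g̃′(1) + ∂ₜf̃(g̃(1),h̃(1)) h̃′(1) + f̃(g̃(0),h̃(0))`. -/
theorem stmt9 (n d : ℕ) (x : Fin n → EuclideanSpace ℝ (Fin d))
    (hx : ∀ a, ‖x a‖ = 1)
    (b : ℕ → ℝ) (hb0 : 1 ≤ b 0) (hbk : ∀ k : ℕ, 1 ≤ k → 1 / (k : ℝ) ^ 2 ≤ b k)
    (hb_sum : Summable b)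
    (H : Matrix (Fin n) (Fin n) ℝ)
    (hH : ∀ a c, H a c = ∑' k : ℕ, b k * ⟪x a, x c⟫ ^ k)
    (hHpd : H.PosDef)
    (c : ℕ → ℕ → ℝ)
    (ag : ℕ → ℕ → ℝ) (βg : (k : ℕ) → ℕ → Fin k → EuclideanSpace ℝ (Fin d))
    (ah : ℕ → ℕ → ℝ) (βh : (k : ℕ) → ℕ → Fin k → EuclideanSpace ℝ (Fin d))
    (hauxg : ∀ k : ℕ, Summable (fun v : ℕ => |ag k v| * ∏ i : Fin k, ‖βg k v i‖))
    (hauxh : ∀ k : ℕ, Summable (fun v : ℕ => |ah k v| * ∏ i : Fin k, ‖βh k v i‖))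
    (hg1 : Summable (fun k : ℕ => auxCoef d ag βg k))
    (hg1' : Summable (fun k : ℕ => (k : ℝ) * auxCoef d ag βg k))
    (hh1 : Summable (fun k : ℕ => auxCoef d ah βh k))
    (hh1' : Summable (fun k : ℕ => (k : ℝ) * auxCoef d ah βh k))
    (hf : Summable (fun p : ℕ × ℕ => |c p.1 p.2| *
      (∑' k : ℕ, auxCoef d ag βg k) ^ p.1 * (∑' k : ℕ, auxCoef d ah βh k) ^ p.2))
    (hfs : Summable (fun p : ℕ × ℕ => (p.1 : ℝ) * |c p.1 p.2| *
      (∑' k : ℕ, auxCoef d ag βg k) ^ (p.1 - 1) *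
      (∑' k : ℕ, auxCoef d ah βh k) ^ p.2))
    (hft : Summable (fun p : ℕ × ℕ => (p.2 : ℝ) * |c p.1 p.2| *
      (∑' k : ℕ, auxCoef d ag βg k) ^ p.1 *
      (∑' k : ℕ, auxCoef d ah βh k) ^ (p.2 - 1)))
    (y : Fin n → ℝ)
    (hy : ∀ a, y a = ∑' p : ℕ × ℕ, c p.1 p.2 *
      (familyFun d ag βg (x a)) ^ p.1 * (familyFun d ah βh (x a)) ^ p.2) :
    Real.sqrt (y ⬝ᵥ (H⁻¹ *ᵥ y)) ≤
      (∑' p : ℕ × ℕ, (p.1 : ℝ) * |c p.1 p.2| *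
          (∑' k : ℕ, auxCoef d ag βg k) ^ (p.1 - 1) *
          (∑' k : ℕ, auxCoef d ah βh k) ^ p.2) *
        (∑' k : ℕ, (k : ℝ) * auxCoef d ag βg k) +
      (∑' p : ℕ × ℕ, (p.2 : ℝ) * |c p.1 p.2| *
          (∑' k : ℕ, auxCoef d ag βg k) ^ p.1 *
          (∑' k : ℕ, auxCoef d ah βh k) ^ (p.2 - 1)) *
        (∑' k : ℕ, (k : ℝ) * auxCoef d ah βh k) +
      ∑' p : ℕ × ℕ, |c p.1 p.2| *
        (auxCoef d ag βg 0) ^ p.1 * (auxCoef d ah βh 0) ^ p.2 := by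
  classical
  -- representations
  set Gg : Rep d := Rep.ofFamily ag βg with hGg
  set Gh : Rep d := Rep.ofFamily ah βh with hGh
  have GgGood : Gg.Good := Rep.good_ofFamily ag βg hauxg hg1 hg1'
  have GhGood : Gh.Good := Rep.good_ofFamily ah βh hauxh hh1 hh1'
  have hAg : Gg.A = ∑' k : ℕ, auxCoef d ag βg k := Rep.A_ofFamily ag βg hauxg hg1
  have hAh : Gh.A = ∑' k : ℕ, auxCoef d ah βh k := Rep.A_ofFamily ah βh hauxh hh1
  have hBg : Gg.B = ∑' k : ℕ, (k : ℝ) * auxCoef d ag βg k := Rep.B_ofFamily ag βg hauxg hg1'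
  have hBh : Gh.B = ∑' k : ℕ, (k : ℝ) * auxCoef d ah βh k := Rep.B_ofFamily ah βh hauxh hh1'
  have hZg : Gg.Z = auxCoef d ag βg 0 := Rep.Z_ofFamily ag βg hauxg hg1
  have hZh : Gh.Z = auxCoef d ah βh 0 := Rep.Z_ofFamily ah βh hauxh hh1
  set R : ℕ × ℕ → Rep d :=
    fun p => Rep.smul (c p.1 p.2) ((Gg.npow p.1).mul (Gh.npow p.2)) with hR
  have goodp : ∀ p : ℕ × ℕ, (R p).Good := fun p =>
    Rep.good_smul _ (Rep.good_mul (Rep.good_npow GgGood p.1) (Rep.good_npow GhGood p.2))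
  have hAp : ∀ p : ℕ × ℕ, (R p).A = |c p.1 p.2| * (Gg.A ^ p.1 * Gh.A ^ p.2) := by
    intro p
    rw [hR]
    rw [Rep.A_smul, Rep.A_mul (Rep.good_npow GgGood p.1).1 (Rep.good_npow GhGood p.2).1,
      Rep.A_npow GgGood p.1, Rep.A_npow GhGood p.2]
  have hZp : ∀ p : ℕ × ℕ, (R p).Z = |c p.1 p.2| * (Gg.Z ^ p.1 * Gh.Z ^ p.2) := by
    intro p
    rw [hR]
    rw [Rep.Z_smul, Rep.Z_mul (Rep.good_npow GgGood p.1).1 (Rep.good_npow GhGood p.2).1,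
      Rep.Z_npow GgGood p.1, Rep.Z_npow GhGood p.2]
  -- summability of the fiber quantities
  have SA : Summable fun p : ℕ × ℕ => (R p).A := by
    refine (hf.congr fun p => ?_)
    rw [hAp p, hAg, hAh]
    ring
  set bnd : ℕ × ℕ → ℝ := fun p =>
    ((p.1 : ℝ) * |c p.1 p.2| * Gg.A ^ (p.1 - 1) * Gh.A ^ p.2) * Gg.B +
    ((p.2 : ℝ) * |c p.1 p.2| * Gg.A ^ p.1 * Gh.A ^ (p.2 - 1)) * Gh.B with hbnd
  have Sbnd : Summable bnd := by
    refine Summable.add ?_ ?_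
    · refine (hfs.mul_right Gg.B).congr fun p => ?_
      rw [hAg, hAh]
    · refine (hft.mul_right Gh.B).congr fun p => ?_
      rw [hAg, hAh]
  have hBp : ∀ p : ℕ × ℕ, (R p).B ≤ bnd p := by
    intro p
    have e1 : (R p).B = |c p.1 p.2| *
        ((Gg.npow p.1).B * Gh.A ^ p.2 + Gg.A ^ p.1 * (Gh.npow p.2).B) := by
      rw [hR]
      rw [Rep.B_smul, Rep.B_mul (Rep.good_npow GgGood p.1) (Rep.good_npow GhGood p.2),
        Rep.A_npow GgGood p.1, Rep.A_npow GhGood p.2]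
    rw [e1, hbnd]
    have hg' : (Gg.npow p.1).B ≤ (p.1 : ℝ) * Gg.A ^ (p.1 - 1) * Gg.B := Rep.B_npow GgGood p.1
    have hh' : (Gh.npow p.2).B ≤ (p.2 : ℝ) * Gh.A ^ (p.2 - 1) * Gh.B := Rep.B_npow GhGood p.2
    have h1 : (Gg.npow p.1).B * Gh.A ^ p.2 ≤ ((p.1 : ℝ) * Gg.A ^ (p.1 - 1) * Gg.B) * Gh.A ^ p.2 :=
      mul_le_mul_of_nonneg_right hg' (pow_nonneg Gh.A_nonneg _)
    have h2 : Gg.A ^ p.1 * (Gh.npow p.2).B ≤ Gg.A ^ p.1 * ((p.2 : ℝ) * Gh.A ^ (p.2 - 1) * Gh.B) :=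
      mul_le_mul_of_nonneg_left hh' (pow_nonneg Gg.A_nonneg _)
    calc |c p.1 p.2| * ((Gg.npow p.1).B * Gh.A ^ p.2 + Gg.A ^ p.1 * (Gh.npow p.2).B)
        ≤ |c p.1 p.2| * (((p.1 : ℝ) * Gg.A ^ (p.1 - 1) * Gg.B) * Gh.A ^ p.2 +
            Gg.A ^ p.1 * ((p.2 : ℝ) * Gh.A ^ (p.2 - 1) * Gh.B)) :=
          mul_le_mul_of_nonneg_left (add_le_add h1 h2) (abs_nonneg _)
      _ = ((p.1 : ℝ) * |c p.1 p.2| * Gg.A ^ (p.1 - 1) * Gh.A ^ p.2) * Gg.B +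
          ((p.2 : ℝ) * |c p.1 p.2| * Gg.A ^ p.1 * Gh.A ^ (p.2 - 1)) * Gh.B := by ring
  have SB : Summable fun p : ℕ × ℕ => (R p).B :=
    Summable.of_nonneg_of_le (fun p => (R p).B_nonneg) hBp Sbnd
  have SZ : Summable fun p : ℕ × ℕ => (R p).Z :=
    Summable.of_nonneg_of_le (fun p => (R p).Z_nonneg)
      (fun p => Rep.Z_le_A (goodp p).1) SA
  set Rt : Rep d := Rep.sigmaP R with hRt
  have RtGood : Rt.Good := Rep.good_sigmaP R goodp SA SB
  -- value of the total representation
  have hval : ∀ a : Fin n, Rt.val (x a) = y a := by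
    intro a
    have hxa : ‖x a‖ ≤ 1 := le_of_eq (hx a)
    rw [hRt, Rep.val_sigmaP R (fun p => (goodp p).1) SA hxa, hy a]
    refine tsum_congr fun p => ?_
    have e : (R p).val (x a) = c p.1 p.2 *
        ((Gg.val (x a)) ^ p.1 * (Gh.val (x a)) ^ p.2) := by
      rw [hR]
      rw [Rep.val_smul, Rep.val_mul (Rep.good_npow GgGood p.1).1 (Rep.good_npow GhGood p.2).1 hxa,
        Rep.val_npow GgGood hxa p.1, Rep.val_npow GhGood hxa p.2]
    rw [e, Rep.val_ofFamily ag βg hauxg hg1 hxa, Rep.val_ofFamily ah βh hauxh hh1 hxa]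
    ring
  -- bounds for B and Z of the total representation
  have hRtB : Rt.B ≤
      (∑' p : ℕ × ℕ, (p.1 : ℝ) * |c p.1 p.2| *
          (∑' k : ℕ, auxCoef d ag βg k) ^ (p.1 - 1) *
          (∑' k : ℕ, auxCoef d ah βh k) ^ p.2) *
        (∑' k : ℕ, (k : ℝ) * auxCoef d ag βg k) +
      (∑' p : ℕ × ℕ, (p.2 : ℝ) * |c p.1 p.2| *
          (∑' k : ℕ, auxCoef d ag βg k) ^ p.1 *
          (∑' k : ℕ, auxCoef d ah βh k) ^ (p.2 - 1)) *
        (∑' k : ℕ, (k : ℝ) * auxCoef d ah βh k) := by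
    rw [hRt, Rep.B_sigmaP R goodp SB]
    calc (∑' p : ℕ × ℕ, (R p).B) ≤ ∑' p : ℕ × ℕ, bnd p := Summable.tsum_le_tsum hBp SB Sbnd
      _ = (∑' p : ℕ × ℕ, ((p.1 : ℝ) * |c p.1 p.2| * Gg.A ^ (p.1 - 1) * Gh.A ^ p.2) * Gg.B) +
          ∑' p : ℕ × ℕ, ((p.2 : ℝ) * |c p.1 p.2| * Gg.A ^ p.1 * Gh.A ^ (p.2 - 1)) * Gh.B := by
          rw [hbnd]
          refine Summable.tsum_add ?_ ?_
          · exact (hfs.mul_right Gg.B).congr fun p => by rw [hAg, hAh]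
          · exact (hft.mul_right Gh.B).congr fun p => by rw [hAg, hAh]
      _ = _ := by
          rw [tsum_mul_right, tsum_mul_right, hAg, hAh, hBg, hBh]
  have hRtZ : Rt.Z = ∑' p : ℕ × ℕ, |c p.1 p.2| *
      (auxCoef d ag βg 0) ^ p.1 * (auxCoef d ah βh 0) ^ p.2 := by
    rw [hRt, Rep.Z_sigmaP R (fun p => (goodp p).1) SA]
    refine tsum_congr fun p => ?_
    rw [hZp p, hZg, hZh]
    ring
  -- linear algebra: reduce to the quadratic form bound
  have hdet : IsUnit H.det := isUnit_iff_ne_zero.mpr (ne_of_gt hHpd.det_pos)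
  set u : Fin n → ℝ := H⁻¹ *ᵥ y with hu
  set q : ℝ := y ⬝ᵥ (H⁻¹ *ᵥ y) with hq
  have hHu : H *ᵥ u = y := by
    rw [hu, Matrix.mulVec_mulVec, Matrix.mul_nonsing_inv H hdet, Matrix.one_mulVec]
  have huy : u ⬝ᵥ y = q := by
    rw [hq, hu, dotProduct_comm]
  have huHu : u ⬝ᵥ H *ᵥ u = q := by rw [hHu, huy]
  have hqnn : 0 ≤ q := by
    rw [← huHu]
    exact quad_nonneg x hx b hb0 hbk hb_sum H hH u
  set M : ℝ := Rt.B + Rt.Z with hM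
  have hMnn : 0 ≤ M := add_nonneg Rt.B_nonneg Rt.Z_nonneg
  have key : |q| ≤ M * Real.sqrt q := by
    have h1 := rep_bound x hx b hb0 hbk hb_sum H hH Rt RtGood u
    rw [huHu] at h1
    have h2 : (∑ a, u a * Rt.val (x a)) = q := by
      rw [← huy]
      exact Finset.sum_congr rfl fun a _ => by rw [hval a]
    rw [h2] at h1
    exact h1
  have hsq : Real.sqrt q ≤ M := by
    rcases eq_or_lt_of_le hqnn with h0 | hpos
    · rw [← h0, Real.sqrt_zero]
      exact hMnn
    · have hs : 0 < Real.sqrt q := Real.sqrt_pos.mpr hpos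
      have hqq : Real.sqrt q * Real.sqrt q = q := Real.mul_self_sqrt hqnn
      have : q ≤ M * Real.sqrt q := by rwa [abs_of_nonneg hqnn] at key
      nlinarith
  calc Real.sqrt (y ⬝ᵥ (H⁻¹ *ᵥ y)) = Real.sqrt q := by rw [hq]
    _ ≤ M := hsq
    _ = Rt.B + Rt.Z := hM
    _ ≤ _ := by
        rw [hRtZ]
        exact add_le_add_left hRtB _
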